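/- Let Ω be a nonempty finite set, F a partition of Ω, μ a strictly positive probability distribution on Ω, and μ_1,…,μ_k probability distributions on Ω such that for each i there exist an F-measurable signaling function τ_i and a signal s_i with Σ_ω μ(ω)τ_i(s_i|ω) > 0 and μ_{τ_i}(·|s_i) = μ_i. Then there exists an F-measurable signaling function τ such that for every signal s generated by τ with positive probability (i.e., Σ_ω μ(ω)τ(s|ω) > 0) the posterior μ_τ(·|s) belongs to the family {μ_1,…,μ_k}, if and only if the family {μ_1,…,μ_k} preserves positivity (PP) with respect to μ. -/

import Mathlib

open Finset

/-- Preserves positivity (PP). -/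
def PP {Ω : Type} [Fintype Ω] {k : ℕ} (ν : Fin k → Ω → ℝ) (μ : Ω → ℝ) : Prop :=
  ∀ u : Ω → ℝ, (∀ i, 0 ≤ ∑ ω, ν i ω * u ω) → 0 ≤ ∑ ω, μ ω * u ω

/-- Theorem 2, part (i): given that each `μ_i` is induced by some
F-measurable signaling function and signal, there exists an F-measurable
signaling function all of whose positive-probability posteriors belong to
`{μ_1,…,μ_k}` iff the family `{μ_1,…,μ_k}` preserves positivity w.r.t. `μ`. -/
theorem stmt_13 {Ω : Type} [Fintype Ω] [Nonempty Ω]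
    (F : Ω → Ω → Prop) (hF : Equivalence F)
    (μ : Ω → ℝ) (hμpos : ∀ ω, 0 < μ ω) (hμsum : (∑ ω, μ ω) = 1)
    {k : ℕ} (ν : Fin k → Ω → ℝ)
    (hν : ∀ i, (∀ ω, 0 ≤ ν i ω) ∧ ((∑ ω, ν i ω) = 1))
    (hgen : ∀ i, ∃ (S : Type) (_ : Fintype S) (τ : Ω → S → ℝ) (s : S),
      (∀ ω s', 0 ≤ τ ω s') ∧ (∀ ω, (∑ s', τ ω s') = 1) ∧
      (∀ ω ω', F ω ω' → ∀ s', τ ω s' = τ ω' s') ∧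
      (0 < (∑ ω, μ ω * τ ω s)) ∧
      (∀ ω, ν i ω = μ ω * τ ω s / (∑ ω', μ ω' * τ ω' s))) :
    (∃ (S : Type) (_ : Fintype S) (τ : Ω → S → ℝ),
      (∀ ω s, 0 ≤ τ ω s) ∧ (∀ ω, (∑ s, τ ω s) = 1) ∧
      (∀ ω ω', F ω ω' → ∀ s, τ ω s = τ ω' s) ∧
      (∀ s, 0 < (∑ ω, μ ω * τ ω s) →
        ∃ i, ∀ ω, μ ω * τ ω s / (∑ ω', μ ω' * τ ω' s) = ν i ω)) ↔
    PP ν μ := by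
  classical
  constructor
  · rintro ⟨S, _inst, τ, hτ0, hτ1, hτF, hpost⟩ u hu
    have key : (∑ ω, μ ω * u ω) = ∑ s, ∑ ω, μ ω * τ ω s * u ω := by
      rw [Finset.sum_comm]
      refine Finset.sum_congr rfl fun ω _ => ?_
      rw [← Finset.sum_mul, ← Finset.mul_sum, hτ1 ω, mul_one]
    rw [key]
    refine Finset.sum_nonneg fun s _ => ?_
    set c := ∑ ω, μ ω * τ ω s with hc
    have hc0 : 0 ≤ c := Finset.sum_nonneg fun ω _ =>
      mul_nonneg (hμpos ω).le (hτ0 ω s)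
    rcases eq_or_lt_of_le hc0 with h0 | hpos
    · have hz : ∀ ω ∈ Finset.univ, μ ω * τ ω s = 0 := by
        rw [← Finset.sum_eq_zero_iff_of_nonneg fun ω _ =>
          mul_nonneg (hμpos ω).le (hτ0 ω s)]
        exact h0.symm
      refine le_of_eq (Finset.sum_eq_zero fun ω _ => ?_).symm
      rw [hz ω (Finset.mem_univ ω), zero_mul]
    · obtain ⟨i, hi⟩ := hpost s hpos
      have heq : ∀ ω, μ ω * τ ω s = c * ν i ω := by
        intro ω
        have h := hi ω
        rw [div_eq_iff hpos.ne'] at h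
        rw [h]; ring
      calc (0:ℝ) ≤ c * ∑ ω, ν i ω * u ω := mul_nonneg hpos.le (hu i)
        _ = ∑ ω, μ ω * τ ω s * u ω := by
            rw [Finset.mul_sum]
            exact Finset.sum_congr rfl fun ω _ => by rw [heq ω]; ring
  · intro hPP
    have hσex : ∀ i, ∃ σ : Ω → ℝ, (∀ ω, 0 ≤ σ ω) ∧
        (∀ ω ω', F ω ω' → σ ω = σ ω') ∧ (∀ ω, ν i ω = μ ω * σ ω) := by
      intro i
      obtain ⟨S, _inst, τ, s, h0, _h1, hFm, hc, hp⟩ := hgen i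
      refine ⟨fun ω => τ ω s / (∑ ω', μ ω' * τ ω' s), fun ω =>
        div_nonneg (h0 ω s) hc.le, fun ω ω' hω => by
          show τ ω s / _ = τ ω' s / _
          rw [hFm ω ω' hω s],
        fun ω => by rw [hp ω, mul_div_assoc]⟩
    choose σ hσ0 hσF hσν using hσex
    have hσsum : ∀ i, (∑ ω, μ ω * σ i ω) = 1 := by
      intro i
      rw [← (hν i).2]
      exact (Finset.sum_congr rfl fun ω _ => (hσν i ω).symm)
    have hmem : ∃ l : Fin k → ℝ, (∀ i, 0 ≤ l i) ∧ (∑ i, l i) = 1 ∧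
        ∀ ω, μ ω = ∑ i, l i * ν i ω := by
      by_contra hcon
      set T : (Fin k → ℝ) → (Ω → ℝ) := fun l => ∑ i, l i • ν i with hT
      set C : Set (Ω → ℝ) := T '' stdSimplex ℝ (Fin k) with hC
      have hTlin : IsLinearMap ℝ T := by
        constructor
        · intro a b; simp [hT, add_smul, Finset.sum_add_distrib]
        · intro c a; simp [hT, smul_smul, Finset.smul_sum]
      have hconv : Convex ℝ C := (convex_stdSimplex ℝ _).is_linear_image hTlin
      have hcont : Continuous T := by
        refine continuous_finset_sum _ fun i _ => ?_
        exact (continuous_apply i).smul continuous_const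
      have hclosed : IsClosed C := ((isCompact_stdSimplex ℝ (Fin k)).image hcont).isClosed
      have hμnot : μ ∉ C := by
        rintro ⟨l, hl, hlμ⟩
        refine hcon ⟨l, hl.1, hl.2, fun ω => ?_⟩
        rw [← hlμ]
        simp [hT, Finset.sum_apply]
      obtain ⟨f, c, hfC, hfμ⟩ := geometric_hahn_banach_closed_point hconv hclosed hμnot
      have hf : ∀ x : Ω → ℝ, f x = ∑ ω, x ω * f (Pi.single ω 1) := by
        intro x
        conv_lhs => rw [← Finset.univ_sum_single x]
        rw [map_sum]
        refine Finset.sum_congr rfl fun ω _ => ?_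
        have h1 : Pi.single ω (x ω) = x ω • (Pi.single ω (1:ℝ) : Ω → ℝ) := by
          rw [← Pi.single_smul, smul_eq_mul, mul_one]
        rw [h1, map_smul, smul_eq_mul]
      set u : Ω → ℝ := fun ω => c - f (Pi.single ω 1) with hudef
      have hui : ∀ i, 0 ≤ ∑ ω, ν i ω * u ω := by
        intro i
        have hνC : ν i ∈ C := by
          refine ⟨Pi.single i 1, single_mem_stdSimplex ℝ i, ?_⟩
          simp [hT, Pi.single_apply, Finset.sum_ite_eq']
        have hfi : f (ν i) < c := hfC _ hνC
        have hval : (∑ ω, ν i ω * u ω) = c - f (ν i) := by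
          simp only [hudef, mul_sub]
          rw [Finset.sum_sub_distrib, ← Finset.sum_mul, (hν i).2, one_mul, ← hf]
        linarith [hval.ge]
      have hμu : (∑ ω, μ ω * u ω) = c - f μ := by
        simp only [hudef, mul_sub]
        rw [Finset.sum_sub_distrib, ← Finset.sum_mul, hμsum, one_mul, ← hf]
      have hfinal := hPP u hui
      rw [hμu] at hfinal
      linarith
    obtain ⟨l, hl0, hl1, hlμ⟩ := hmem
    refine ⟨Fin k, inferInstance, fun ω i => l i * σ i ω,
      fun ω i => mul_nonneg (hl0 i) (hσ0 i ω), ?_, ?_, ?_⟩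
    · intro ω
      show (∑ i, l i * σ i ω) = 1
      have h1 : μ ω * ∑ i, l i * σ i ω = μ ω * 1 := by
        rw [mul_one, Finset.mul_sum]
        calc ∑ i, μ ω * (l i * σ i ω) = ∑ i, l i * ν i ω :=
              Finset.sum_congr rfl fun i _ => by rw [hσν i ω]; ring
          _ = μ ω := (hlμ ω).symm
      exact mul_left_cancel₀ (hμpos ω).ne' h1
    · intro ω ω' hω i
      show l i * σ i ω = l i * σ i ω'
      rw [hσF i ω ω' hω]
    · intro s hs
      have hcs : (∑ ω, μ ω * (l s * σ s ω)) = l s := by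
        rw [show (∑ ω, μ ω * (l s * σ s ω)) = l s * ∑ ω, μ ω * σ s ω by
          rw [Finset.mul_sum]; exact Finset.sum_congr rfl fun ω _ => by ring,
          hσsum s, mul_one]
      rw [hcs] at hs ⊢
      refine ⟨s, fun ω => ?_⟩
      show μ ω * (l s * σ s ω) / l s = ν s ω
      rw [div_eq_iff hs.ne', hσν s ω]; ring
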